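/- Let V be finite, e ⊆ V, g : 2^e → ℝ≥0 submodular with g(∅) = 0, and for u ∈ S, v ∈ V∖S let P^{u→v} ⊆ V be any set with u ∈ P^{u→v}, v ∉ P^{u→v} minimizing g(P ∩ e) among sets containing u and not v (and set P^{u→v} = ∅ whenever u ∉ e). Then S ∩ e = ⋃_{u ∈ S} ⋂_{v ∈ V∖S} (P^{u→v} ∩ e) for every nonempty proper subset S of V. -/
import Mathlib


theorem stmt3 {V : Type*} [Fintype V] [DecidableEq V]
    (e : Finset V) (g : Finset V → ℝ)
    (hg0 : g ∅ = 0)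
    (hnn : ∀ S ⊆ e, 0 ≤ g S)
    (hsub : ∀ A ⊆ e, ∀ B ⊆ e, g (A ∪ B) + g (A ∩ B) ≤ g A + g B)
    (S : Finset V) (hS0 : S ≠ ∅) (hSV : S ≠ Finset.univ)
    (P : V → V → Finset V)
    (hP : ∀ u ∈ S, ∀ v ∈ Sᶜ,
      (u ∈ e → u ∈ P u v ∧ v ∉ P u v ∧
        ∀ T : Finset V, u ∈ T → v ∉ T → g (P u v ∩ e) ≤ g (T ∩ e)) ∧
      (u ∉ e → P u v = ∅)) :
    S ∩ e = S.biUnion (fun u => Sᶜ.inf (fun v => P u v ∩ e)) := by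
  ext x
  simp only [Finset.mem_inter, Finset.mem_biUnion]
  constructor
  · rintro ⟨hxS, hxe⟩
    refine ⟨x, hxS, ?_⟩
    have h2 : ∀ v ∈ Sᶜ, x ∈ P x v ∩ e := fun v hv =>
      Finset.mem_inter.mpr ⟨((hP x hxS v hv).1 hxe).1, hxe⟩
    have : ({x} : Finset V) ≤ Sᶜ.inf (fun v => P x v ∩ e) :=
      Finset.le_inf fun v hv y hy => (Finset.mem_singleton.mp hy) ▸ h2 v hv
    exact this (Finset.mem_singleton_self x)
  · rintro ⟨u, huS, hx⟩
    have hSc : Sᶜ.Nonempty := by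
      rw [← Finset.card_pos, Finset.card_compl]
      have := (Finset.card_lt_iff_ne_univ S).mpr hSV
      omega
    obtain ⟨w, hw⟩ := hSc
    have hxw : x ∈ P u w ∩ e := by
      have hle := Finset.inf_le (f := fun v => P u v ∩ e) hw
      exact hle hx
    have hue : u ∈ e := by
      by_contra hue
      have := (hP u huS w hw).2 hue
      rw [this] at hxw
      simp at hxw
    have hxe : x ∈ e := (Finset.mem_inter.mp hxw).2
    refine ⟨?_, hxe⟩
    by_contra hxS
    have hxc : x ∈ Sᶜ := Finset.mem_compl.mpr hxS
    have hle := Finset.inf_le (f := fun v => P u v ∩ e) hxc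
    have : x ∈ P u x ∩ e := hle hx
    exact ((hP u huS x hxc).1 hue).2.1 (Finset.mem_inter.mp this).1
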